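/- Let d ≥ 1 and let A ⊆ ℤ^d be a finite connected set containing at least two sites. Then there exist points x_1, ..., x_m ∈ A with m = diam(A) such that ‖x_i − x_j‖_∞ ≥ |i − j| for all i, j ∈ {1, ..., m}. -/

import Mathlib

open MeasureTheory ProbabilityTheory
open scoped ENNReal NNReal

noncomputable section

namespace RWPaper

/-- Vectors in `ℤ^d`. -/
abbrev V (d : ℕ) := Fin d → ℤ

/-- The `2d` unit step vectors `±e_j` of `ℤ^d`. -/
def stepSet (d : ℕ) : Finset (V d) :=
  Finset.image
    (fun p : Fin d × Bool => fun i => if i = p.1 then (if p.2 then 1 else -1) else 0)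
    Finset.univ

/-- The uniform distribution on the `2d` unit steps of `ℤ^d`. -/
def stepMeasure (d : ℕ) : Measure (V d) :=
  ((stepSet d).card : ℝ≥0∞)⁻¹ • ∑ v ∈ stepSet d, Measure.dirac v

/-- The position at time `k` of the walk started at `x` with increments `ξ 0, ξ 1, ...`. -/
def walk {Ω : Type*} {d : ℕ} (x : V d) (ξ : ℕ → Ω → V d) (k : ℕ) (ω : Ω) : V d :=
  x + ∑ i ∈ Finset.range k, ξ i ω

/-- `ξ` is a family of i.i.d. uniform nearest-neighbour steps under `P`; together with
`walk` this encodes the law `P_x` of the simple random walk on `ℤ^d`. -/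
def IsSteps {Ω : Type*} [MeasurableSpace Ω] {ι : Type*} {d : ℕ}
    (P : Measure Ω) (ξ : ι → Ω → V d) : Prop :=
  (∀ i, Measurable (ξ i)) ∧ (∀ i, Measure.map (ξ i) P = stepMeasure d) ∧
    iIndepFun ξ P

/-- The Euclidean norm on `ℤ^d`. -/
def eunorm {d : ℕ} (x : V d) : ℝ := Real.sqrt (∑ i, ((x i : ℝ)) ^ 2)

/-- The `ℓ^∞` norm on `ℤ^d`, as a natural number. -/
def linf {d : ℕ} (x : V d) : ℕ := Finset.univ.sup fun i => (x i).natAbs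

/-- Two sites of `ℤ^d` are nearest neighbours if their `ℓ¹`-distance is `1`. -/
def NbAdj {d : ℕ} (x y : V d) : Prop := ∑ i, (x i - y i).natAbs = 1

/-- A set `A ⊆ ℤ^d` is connected if any two of its points are joined by a
nearest-neighbour path lying in `A`. -/
def ConnectedSet {d : ℕ} (A : Set (V d)) : Prop :=
  ∀ x ∈ A, ∀ y ∈ A, ∃ (m : ℕ) (p : ℕ → V d), p 0 = x ∧ p m = y ∧
    (∀ k ≤ m, p k ∈ A) ∧ ∀ k < m, NbAdj (p k) (p (k + 1))

/-- The `ℓ^∞` diameter of a finite set. -/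
def fdiam {d : ℕ} (A : Finset (V d)) : ℕ := A.sup fun x => A.sup fun y => linf (x - y)

/-- `ℓ(x,A)`: the maximal `ℓ^∞` distance between `x` and the points of `A`. -/
def ell {d : ℕ} (x : V d) (A : Finset (V d)) : ℕ := A.sup fun y => linf (x - y)


private lemma ivt_aux (f : ℕ → ℤ) :
    ∀ n : ℕ, (∀ k < n, (f (k+1) - f k).natAbs ≤ 1) → ∀ t : ℤ, f 0 ≤ t → t ≤ f n →
      ∃ k ≤ n, f k = t := by
  intro n
  induction n with
  | zero => intro _ t h0 h1; exact ⟨0, le_refl 0, le_antisymm h0 h1⟩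
  | succ n ih =>
    intro h t h0 h1
    by_cases ht : t ≤ f n
    · obtain ⟨k, hk, hfk⟩ := ih (fun k hk => h k (Nat.lt_succ_of_lt hk)) t h0 ht
      exact ⟨k, Nat.le_succ_of_le hk, hfk⟩
    · have := h n (Nat.lt_succ_self n)
      exact ⟨n+1, le_refl _, by omega⟩

private lemma main_aux {d : ℕ} (A : Finset (V d)) (hconn : ConnectedSet (A : Set (V d)))
    (a b : V d) (ha : a ∈ A) (hb : b ∈ A) (c : Fin d)
    (hm : b c - a c = (fdiam A : ℤ)) :
    ∃ x : Fin (fdiam A) → V d, (∀ i, x i ∈ A) ∧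
      ∀ i j : Fin (fdiam A),
        (((i : ℕ) : ℤ) - ((j : ℕ) : ℤ)).natAbs ≤ linf (x i - x j) := by
  obtain ⟨n, p, hp0, hpn, hpA, hadj⟩ := hconn a ha b hb
  have hstep : ∀ k < n, (p (k+1) c - p k c).natAbs ≤ 1 := by
    intro k hk
    have h1 : (p k c - p (k+1) c).natAbs ≤ 1 := by
      have h2 := hadj k hk
      unfold NbAdj at h2
      calc (p k c - p (k+1) c).natAbs
          ≤ ∑ i, (p k i - p (k+1) i).natAbs :=
            Finset.single_le_sum (f := fun i => (p k i - p (k+1) i).natAbs)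
              (fun _ _ => Nat.zero_le _) (Finset.mem_univ c)
        _ = 1 := h2
    omega
  have key : ∀ i : Fin (fdiam A), ∃ y, y ∈ A ∧ y c = a c + (i : ℕ) := by
    intro i
    have hi : ((i : ℕ) : ℤ) < (fdiam A : ℤ) := by exact_mod_cast i.2
    obtain ⟨k, hk, hfk⟩ := ivt_aux (fun k => p k c) n hstep (a c + (i : ℕ))
      (by show p 0 c ≤ a c + ((i : ℕ) : ℤ); have := congrFun hp0 c; omega)
      (by show a c + ((i : ℕ) : ℤ) ≤ p n c; have := congrFun hpn c; omega)
    exact ⟨p k, hpA k hk, hfk⟩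
  choose x hxA hxc using key
  refine ⟨x, hxA, fun i j => ?_⟩
  have hle : ((x i - x j) c).natAbs ≤ linf (x i - x j) :=
    Finset.le_sup (f := fun i' => ((x i - x j) i').natAbs) (Finset.mem_univ c)
  have : (x i - x j) c = ((i : ℕ) : ℤ) - ((j : ℕ) : ℤ) := by
    simp only [Pi.sub_apply, hxc]; ring
  rw [this] at hle
  exact hle

/-- in a finite connected `A ⊆ ℤ^d` with at least two sites, one can find
`m = diam(A)` points `x_1, …, x_m ∈ A` with `‖x_i - x_j‖_∞ ≥ |i - j|` for all `i, j`. -/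
theorem sparse_subset_of_connected (d : ℕ) (hd : 1 ≤ d)
    (A : Finset (V d)) (hconn : ConnectedSet (A : Set (V d))) (hcard : 2 ≤ A.card) :
    ∃ x : Fin (fdiam A) → V d, (∀ i, x i ∈ A) ∧
      ∀ i j : Fin (fdiam A),
        (((i : ℕ) : ℤ) - ((j : ℕ) : ℤ)).natAbs ≤ linf (x i - x j) := by
  have hA : A.Nonempty := Finset.card_pos.mp (by omega)
  obtain ⟨a, ha, hsup1⟩ := Finset.exists_mem_eq_sup A hA
    (fun x => A.sup fun y => linf (x - y))
  obtain ⟨b, hb, hsup2⟩ := Finset.exists_mem_eq_sup A hA (fun y => linf (a - y))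
  have hab : linf (a - b) = fdiam A := by rw [fdiam, hsup1, hsup2]
  have hdne : (Finset.univ : Finset (Fin d)).Nonempty := ⟨⟨0, hd⟩, Finset.mem_univ _⟩
  obtain ⟨c, _, hc⟩ := Finset.exists_mem_eq_sup Finset.univ hdne
    (fun i => ((a - b) i).natAbs)
  have hc' : (a c - b c).natAbs = fdiam A := by
    have : linf (a - b) = ((a - b) c).natAbs := hc
    simpa [Pi.sub_apply, hab] using this.symm
  rcases le_total (a c) (b c) with h | h
  · exact main_aux A hconn a b ha hb c (by omega)
  · exact main_aux A hconn b a hb ha c (by omega)
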